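/- Let b, n be natural numbers with n ≥ 3 and (n − b − 2)(n − b − 6) ≤ 3b. Consider an election with at most n candidates, and let x be a non-dirty candidate with respect to threshold 5/6. Let r be a 3-wise median of the election of the form A > x > B (A the set of candidates ranked before x in r, B the set ranked after x) such that |B| ≥ b and every candidate z with z ≥_{5/6} x belongs to A. Then for every candidate y ≠ x with x ≥_{5/6} y, x is ranked before y in r. -/

import Mathlib

set_option linter.unusedSectionVars false


open Finset

/-- A ranking (strict total order) of the finite candidate set `C`, encoded as a
bijection with `Fin (Fintype.card C)`; position `0` is the top of the ranking. -/
abbrev Ranking (C : Type*) [Fintype C] := C ≃ Fin (Fintype.card C)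

section Defs

variable {C : Type*} [Fintype C] [DecidableEq C]

/-- `x` is ranked (strictly) before `y` in the ranking `π`. -/
def Before (π : Ranking C) (x y : C) : Prop := π x < π y

instance (π : Ranking C) (x y : C) : Decidable (Before π x y) :=
  inferInstanceAs (Decidable (π x < π y))

instance : DecidableEq (Ranking C) := fun a b =>
  decidable_of_iff (∀ i, a i = b i) Equiv.ext_iff.symm

/-- The top-ranked element of `S ⊆ C` according to `π` (`⊤` if `S = ∅`). -/
def topS (π : Ranking C) (S : Finset C) : WithTop C :=
  (S.image π).min.map (fun i => π.symm i)

/-- The `k`-wise Kendall-tau distance between two rankings: the number of subsets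
`S ⊆ C` with `|S| ≤ k` on whose top element the two rankings disagree (subsets of
size at most one never contribute). -/
def kDist (k : ℕ) (π σ : Ranking C) : ℕ :=
  ((Finset.univ : Finset C).powerset.filter
    (fun S => S.card ≤ k ∧ topS π S ≠ topS σ S)).card

/-- The `k`-wise Kendall-tau distance from a ranking to a voting profile. -/
def kDistV (k : ℕ) (π : Ranking C) (V : Multiset (Ranking C)) : ℕ :=
  (V.map (fun σ => kDist k π σ)).sum

/-- `π` is a `k`-wise median (for `k = 2`: a Kemeny ranking) of the profile `V`. -/
def IsKMedian (k : ℕ) (V : Multiset (Ranking C)) (π : Ranking C) : Prop :=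
  ∀ σ : Ranking C, kDistV k π V ≤ kDistV k σ V

/-- The number of votes of `V` in which `x` is ranked before `y`. -/
def votesBefore (V : Multiset (Ranking C)) (x y : C) : ℕ :=
  Multiset.card (V.filter (fun v => Before v x y))

/-- `x ≥ₛ y` : `x` is ranked before `y` in at least `s·|V|` of the votes. -/
def AtLeastRatio (V : Multiset (Ranking C)) (s : ℝ) (x y : C) : Prop :=
  s * (Multiset.card V : ℝ) ≤ (votesBefore V x y : ℝ)

/-- `x >ₛ y` : `x` is ranked before `y` in more than `s·|V|` of the votes. -/
def MoreThanRatio (V : Multiset (Ranking C)) (s : ℝ) (x y : C) : Prop :=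
  s * (Multiset.card V : ℝ) < (votesBefore V x y : ℝ)

noncomputable instance (V : Multiset (Ranking C)) (s : ℝ) (x y : C) :
    Decidable (AtLeastRatio V s x y) :=
  inferInstanceAs (Decidable (s * (Multiset.card V : ℝ) ≤ (votesBefore V x y : ℝ)))

/-- `x` is a non-dirty candidate w.r.t. threshold `s`. -/
def NonDirty (V : Multiset (Ranking C)) (s : ℝ) (x : C) : Prop :=
  ∀ y : C, y ≠ x → AtLeastRatio V s x y ∨ AtLeastRatio V s y x

/-- `x` is ranked first (is the winner) in the ranking `π`. -/
def RankedFirst (π : Ranking C) (x : C) : Prop :=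
  ∀ y : C, y ≠ x → Before π x y

instance (π : Ranking C) (x : C) : Decidable (RankedFirst π x) :=
  inferInstanceAs (Decidable (∀ y : C, y ≠ x → Before π x y))

end Defs

/-! ### Auxiliary machinery -/

section Aux

/-- Rotation of the interval `[q,P]` of `Fin N` (`q ≤ P`): `q ↦ P`, `j ↦ j-1` for `q < j ≤ P`. -/
def movePerm {N : ℕ} (q P : Fin N) (h : q.val ≤ P.val) : Equiv.Perm (Fin N) where
  toFun j := ⟨if j.val = q.val then P.val else
      if q.val < j.val ∧ j.val ≤ P.val then j.val - 1 else j.val, by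
    have := q.isLt; have := P.isLt; have := j.isLt; split_ifs <;> omega⟩
  invFun j := ⟨if j.val = P.val then q.val else
      if q.val ≤ j.val ∧ j.val < P.val then j.val + 1 else j.val, by
    have := q.isLt; have := P.isLt; have := j.isLt; split_ifs <;> omega⟩
  left_inv j := by
    have := q.isLt; have := P.isLt; have := j.isLt
    apply Fin.ext; simp only; split_ifs <;> omega
  right_inv j := by
    have := q.isLt; have := P.isLt; have := j.isLt
    apply Fin.ext; simp only; split_ifs <;> omega

lemma movePerm_apply {N : ℕ} (q P : Fin N) (h : q.val ≤ P.val) (j : Fin N) :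
    ((movePerm q P h) j).val = if j.val = q.val then P.val else
      if q.val < j.val ∧ j.val ≤ P.val then j.val - 1 else j.val := rfl

variable {C : Type*} [Fintype C] [DecidableEq C]

lemma topS_empty (π : Ranking C) : topS π (∅ : Finset C) = ⊤ := rfl

lemma topS_eq_of (π : Ranking C) {S : Finset C} {m : C} (hm : m ∈ S)
    (h : ∀ z ∈ S, π m ≤ π z) : topS π S = (m : WithTop C) := by
  have hmin : (S.image π).min = (π m : WithTop (Fin (Fintype.card C))) := by
    apply le_antisymm
    · exact Finset.min_le (Finset.mem_image_of_mem π hm)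
    · apply Finset.le_min
      intro b hb
      obtain ⟨z, hz, rfl⟩ := Finset.mem_image.mp hb
      exact_mod_cast h z hz
  rw [topS, hmin]
  simp

lemma topS_eq_iff (π : Ranking C) {S : Finset C} {m : C} (hm : m ∈ S) :
    topS π S = (m : WithTop C) ↔ ∀ z ∈ S, π m ≤ π z := by
  constructor
  · intro ht
    obtain ⟨m0, hm0, hmin⟩ := Finset.exists_min_image S π ⟨m, hm⟩
    have h0 := topS_eq_of π hm0 hmin
    rw [h0] at ht
    obtain rfl : m0 = m := by exact_mod_cast ht
    exact hmin
  · exact topS_eq_of π hm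

/-! ### Multiset counting lemmas -/

lemma ms_filter_add_not {α : Type*} (V : Multiset α) (p : α → Prop) [DecidablePred p] :
    (V.filter p).card + (V.filter fun a => ¬ p a).card = Multiset.card V := by
  rw [← Multiset.card_add, Multiset.filter_add_not]

lemma ms_card_mono {α : Type*} (V : Multiset α) (p q : α → Prop) [DecidablePred p]
    [DecidablePred q] (h : ∀ a, p a → q a) :
    (V.filter p).card ≤ (V.filter q).card :=
  Multiset.card_le_card (Multiset.monotone_filter_right V h)

lemma ms_card_and {α : Type*} (V : Multiset α) (p q : α → Prop) [DecidablePred p]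
    [DecidablePred q] :
    (V.filter p).card + (V.filter q).card ≤
      Multiset.card V + (V.filter fun a => p a ∧ q a).card := by
  have h1 := Multiset.filter_add_filter p q V
  have h2 : ((V.filter p) + (V.filter q)).card =
      ((V.filter fun a => p a ∨ q a) + (V.filter fun a => p a ∧ q a)).card := by rw [h1]
  rw [Multiset.card_add, Multiset.card_add] at h2
  have h3 : (V.filter fun a => p a ∨ q a).card ≤ Multiset.card V :=
    Multiset.card_le_card (Multiset.filter_le _ V)
  omega

lemma ms_sum_map_sum {α β M : Type*} [AddCommMonoid M] [DecidableEq β]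
    (V : Multiset α) (s : Finset β) (f : β → α → M) :
    (V.map (fun a => ∑ b ∈ s, f b a)).sum = ∑ b ∈ s, (V.map (f b)).sum := by
  induction V using Multiset.induction with
  | empty => simp
  | cons a V ih => simp [ih, Finset.sum_add_distrib]

lemma ms_sum_ite {α : Type*} (V : Multiset α) (p : α → Prop) [DecidablePred p] :
    (V.map (fun a => if p a then 1 else 0)).sum = (V.filter p).card := by
  induction V using Multiset.induction with
  | empty => simp
  | cons a V ih => by_cases h : p a <;> simp [h, ih, Nat.add_comm]

/-! ### Vote-count lemmas -/

lemma vB_total (V : Multiset (Ranking C)) {c d : C} (h : c ≠ d) :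
    votesBefore V c d + votesBefore V d c = Multiset.card V := by
  rw [votesBefore, votesBefore]
  rw [show (V.filter fun v => Before v d c) = V.filter fun v => ¬ Before v c d from
    Multiset.filter_congr fun v _ => by
      unfold Before
      constructor
      · intro h1 h2; exact absurd (h1.trans h2) (lt_irrefl _)
      · intro h1
        rcases lt_or_gt_of_ne (fun he => h ((EmbeddingLike.apply_eq_iff_eq v).mp he)) with h2 | h2
        · exact absurd h2 h1
        · exact h2]
  exact ms_filter_add_not V _

lemma vB_chain (V : Multiset (Ranking C)) (a c e : C) :
    votesBefore V a c + votesBefore V c e ≤ votesBefore V a e + Multiset.card V := by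
  have h1 := ms_card_and V (fun v => Before v a c) (fun v => Before v c e)
  have h2 : (V.filter fun v => Before v a c ∧ Before v c e).card ≤ votesBefore V a e :=
    ms_card_mono V _ _ fun v hv => lt_trans hv.1 hv.2
  unfold votesBefore at h2 ⊢
  omega

/-- Count of votes whose top of `S` is `c` is at most `votesBefore c d` for any other `d ∈ S`. -/
lemma card_top_le (V : Multiset (Ranking C)) {S : Finset C} {c d : C}
    (hc : c ∈ S) (hd : d ∈ S) (hcd : c ≠ d) :
    (V.filter fun σ => topS σ S = (c : WithTop C)).card ≤ votesBefore V c d := by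
  apply ms_card_mono
  intro σ hσ
  have h := (topS_eq_iff σ hc).mp hσ d hd
  exact lt_of_le_of_ne h (fun he => hcd (σ.injective he))

/-- If `S ⊆ {a,b,c}` (with `a ∈ S`), votes ranking `a` before both `b` and `c`
have top of `S` equal to `a`. -/
lemma card_top_ge (V : Multiset (Ranking C)) {S : Finset C} {a b c : C}
    (ha : a ∈ S) (hS : ∀ z ∈ S, z = a ∨ z = b ∨ z = c) :
    (V.filter fun σ => Before σ a b ∧ Before σ a c).card ≤
      (V.filter fun σ => topS σ S = (a : WithTop C)).card := by
  apply ms_card_mono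
  intro σ hσ
  apply topS_eq_of σ ha
  intro z hz
  rcases hS z hz with rfl | rfl | rfl
  · exact le_refl _
  · exact le_of_lt hσ.1
  · exact le_of_lt hσ.2

lemma w_eq (V : Multiset (Ranking C)) (π : Ranking C) (S : Finset C) (c : C)
    (h : topS π S = (c : WithTop C)) :
    (V.filter fun σ => topS π S ≠ topS σ S).card =
      Multiset.card V - (V.filter fun σ => topS σ S = (c : WithTop C)).card := by
  have : (V.filter fun σ => topS π S ≠ topS σ S) =
      V.filter fun σ => ¬ (topS σ S = (c : WithTop C)) := by
    apply Multiset.filter_congr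
    intro σ _
    rw [h]
    exact ⟨fun h1 h2 => h1 h2.symm, fun h1 h2 => h1 h2.symm⟩
  rw [this]
  have := ms_filter_add_not V (fun σ => topS σ S = (c : WithTop C))
  omega

/-- Number of votes whose top of `S` is `c`. -/
def Nc (V : Multiset (Ranking C)) (c : C) (S : Finset C) : ℕ :=
  (V.filter fun σ => topS σ S = (c : WithTop C)).card

/-- Number of votes disagreeing with `π` on the top of `S`. -/
def Wc (V : Multiset (Ranking C)) (π : Ranking C) (S : Finset C) : ℕ :=
  (V.filter fun σ => topS π S ≠ topS σ S).card

lemma Nc_le_card (V : Multiset (Ranking C)) (c : C) (S : Finset C) :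
    Nc V c S ≤ Multiset.card V := Multiset.card_le_card (Multiset.filter_le _ V)

lemma Wc_le_card (V : Multiset (Ranking C)) (π : Ranking C) (S : Finset C) :
    Wc V π S ≤ Multiset.card V := Multiset.card_le_card (Multiset.filter_le _ V)

lemma Wc_eq (V : Multiset (Ranking C)) (π : Ranking C) (S : Finset C) (c : C)
    (h : topS π S = (c : WithTop C)) :
    Wc V π S = Multiset.card V - Nc V c S := w_eq V π S c h

lemma Nc_le_vB (V : Multiset (Ranking C)) {S : Finset C} {c d : C}
    (hc : c ∈ S) (hd : d ∈ S) (hcd : c ≠ d) :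
    Nc V c S ≤ votesBefore V c d := card_top_le V hc hd hcd

lemma vB_le_Nc (V : Multiset (Ranking C)) {S : Finset C} {a b : C}
    (ha : a ∈ S) (hS : ∀ z ∈ S, z = a ∨ z = b) :
    votesBefore V a b ≤ Nc V a S := by
  have h2 := card_top_ge (b := b) (c := b) V ha (fun z hz => by
    rcases hS z hz with h | h
    · exact Or.inl h
    · exact Or.inr (Or.inl h))
  refine le_trans (le_of_eq ?_) h2
  unfold votesBefore
  congr 1
  exact Multiset.filter_congr fun v _ => ⟨fun h => ⟨h, h⟩, fun h => h.1⟩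

lemma vB_vB_le_Nc (V : Multiset (Ranking C)) {S : Finset C} {a b c : C}
    (ha : a ∈ S) (hS : ∀ z ∈ S, z = a ∨ z = b ∨ z = c) :
    votesBefore V a b + votesBefore V a c ≤ Multiset.card V + Nc V a S := by
  have h1 := ms_card_and V (fun v => Before v a b) (fun v => Before v a c)
  have h2 := card_top_ge V ha hS
  unfold votesBefore
  unfold Nc
  omega

/-- Rewriting `kDistV` as a sum over subsets. -/
lemma kDistV_eq_sum (k : ℕ) (π : Ranking C) (V : Multiset (Ranking C)) :
    kDistV k π V = ∑ S ∈ (Finset.univ : Finset C).powerset.filter (fun S => S.card ≤ k),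
      (V.filter fun σ => topS π S ≠ topS σ S).card := by
  have hd : ∀ σ : Ranking C, kDist k π σ =
      ∑ S ∈ (Finset.univ : Finset C).powerset.filter (fun S => S.card ≤ k),
        if topS π S ≠ topS σ S then 1 else 0 := by
    intro σ
    rw [kDist, ← Finset.filter_filter, Finset.card_filter]
  rw [kDistV]
  calc (V.map fun σ => kDist k π σ).sum
      = (V.map fun σ => ∑ S ∈ (Finset.univ : Finset C).powerset.filter (fun S => S.card ≤ k),
          if topS π S ≠ topS σ S then 1 else 0).sum := by
        congr 1; exact Multiset.map_congr rfl fun σ _ => hd σ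
    _ = ∑ S ∈ (Finset.univ : Finset C).powerset.filter (fun S => S.card ≤ k),
          (V.map fun σ => if topS π S ≠ topS σ S then 1 else 0).sum := by
        rw [ms_sum_map_sum]
    _ = _ := Finset.sum_congr rfl fun S _ => ms_sum_ite V _

lemma kDistV_eq_sum' (k : ℕ) (π : Ranking C) (V : Multiset (Ranking C)) :
    kDistV k π V = ∑ S ∈ (Finset.univ : Finset C).powerset.filter (fun S => S.card ≤ k),
      Wc V π S := kDistV_eq_sum k π V

lemma arith_key (n b k β : ℤ) (hb : 0 ≤ b) (hk : 0 ≤ k)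
    (hbn : (n - b - 2) * (n - b - 6) ≤ 3 * b)
    (hkb : k + β + 2 ≤ n) (hbβ : b ≤ β) :
    k * (k - 1) < 4 + 4 * k + 3 * β := by
  rcases le_or_gt k 5 with h | h
  · nlinarith
  · nlinarith [mul_le_mul_of_nonneg_left (by linarith : k ≤ n - β - 2)
        (by linarith : (0:ℤ) ≤ k - 4),
      mul_le_mul_of_nonneg_right (by linarith : k ≤ n - β - 2)
        (by linarith : (0:ℤ) ≤ n - β - 6)]

end Aux
set_option maxHeartbeats 4000000 in
/-- $5/6$-majority rule under a size condition on `B`. -/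
theorem stmt19 {C : Type*} [Fintype C] [DecidableEq C]
    (b n : ℕ) (hn3 : 3 ≤ n)
    (hbn : ((n : ℤ) - b - 2) * ((n : ℤ) - b - 6) ≤ 3 * b)
    (hC : Fintype.card C ≤ n)
    (V : Multiset (Ranking C)) (hV : V ≠ 0)
    (x : C) (hx : NonDirty V (5 / 6) x)
    (r : Ranking C) (hr : IsKMedian 3 V r)
    (hB : b ≤ (Finset.univ.filter (fun z : C => Before r x z)).card)
    (hA : ∀ z : C, AtLeastRatio V (5 / 6) z x → Before r z x) :
    ∀ y : C, y ≠ x → AtLeastRatio V (5 / 6) x y → Before r x y := by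
  intro y0 hy0 hxy0
  by_contra hcon
  classical
  have hM1 : 1 ≤ Multiset.card V := Multiset.card_pos.mpr hV
  set M : ℕ := Multiset.card V with hMdef
  -- `y0` is ranked above `x` in `r`
  have hy0x : Before r y0 x := by
    unfold Before at hcon ⊢
    rcases lt_trichotomy (r y0) (r x) with h | h | h
    · exact h
    · exact absurd (r.injective h) hy0
    · exact absurd h hcon
  -- choose `y`, the lowest-ranked candidate above `x` that `x` beats with 5/6 majority
  have hGne : (Finset.univ.filter
      (fun z : C => z ≠ x ∧ Before r z x ∧ AtLeastRatio V (5/6) x z)).Nonempty :=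
    ⟨y0, by simp only [Finset.mem_filter, Finset.mem_univ, true_and]; exact ⟨hy0, hy0x, hxy0⟩⟩
  obtain ⟨y, hyG, hymax⟩ := Finset.exists_max_image _ (fun z => ((r z : Fin _) : ℕ)) hGne
  simp only [Finset.mem_filter, Finset.mem_univ, true_and] at hyG
  obtain ⟨hyne, hyrx, hxy⟩ := hyG
  have hymax' : ∀ z : C, z ≠ x → Before r z x → AtLeastRatio V (5/6) x z →
      ((r z : Fin _) : ℕ) ≤ ((r y : Fin _) : ℕ) := fun z h1 h2 h3 =>
    hymax z (by simp only [Finset.mem_filter, Finset.mem_univ, true_and]; exact ⟨h1, h2, h3⟩)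
  -- positions
  have hqP : ((r y : Fin _) : ℕ) < ((r x : Fin _) : ℕ) := hyrx
  -- the modified ranking: `y` is moved to just below `x`
  set r' : Ranking C := r.trans (movePerm (r y) (r x) (le_of_lt hqP)) with hr'def
  have hval : ∀ z : C, ((r' z : Fin _) : ℕ) =
      if z = y then ((r x : Fin _) : ℕ) else
      if ((r y : Fin _) : ℕ) < ((r z : Fin _) : ℕ) ∧ ((r z : Fin _) : ℕ) ≤ ((r x : Fin _) : ℕ)
        then ((r z : Fin _) : ℕ) - 1 else ((r z : Fin _) : ℕ) := by
    intro z
    have : ((r' z : Fin _) : ℕ) = ((movePerm (r y) (r x) (le_of_lt hqP)) (r z) : ℕ) := rfl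
    rw [this, movePerm_apply]
    by_cases hz : z = y
    · subst hz; simp
    · have hne : ((r z : Fin _) : ℕ) ≠ ((r y : Fin _) : ℕ) :=
        fun h => hz (r.injective (Fin.ext h))
      rw [if_neg hne, if_neg hz]
  -- the "bad" candidates between y and x, and the set B below x
  set K : Finset C := Finset.univ.filter
      (fun z : C => ((r y : Fin _) : ℕ) < ((r z : Fin _) : ℕ) ∧
        ((r z : Fin _) : ℕ) < ((r x : Fin _) : ℕ)) with hKdef
  set B : Finset C := Finset.univ.filter (fun z : C => Before r x z) with hBdef
  -- basic memberships
  have hxK : x ∉ K := by simp [hKdef]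
  have hyK : y ∉ K := by simp [hKdef]
  have hxB : x ∉ B := by rw [hBdef, Finset.mem_filter]; simp [Before]
  have hyB : y ∉ B := by
    simp only [hBdef, Finset.mem_filter, Finset.mem_univ, true_and]
    intro h; exact absurd (lt_trans h hyrx) (lt_irrefl _)
  have hKB : ∀ u ∈ K, u ∉ B := by
    intro u hu
    simp only [hKdef, hBdef, Finset.mem_filter, Finset.mem_univ, true_and] at hu ⊢
    intro h; unfold Before at h; omega
  have hKy : ∀ u ∈ K, u ≠ y := fun u hu h => hyK (h ▸ hu)
  have hKx : ∀ u ∈ K, u ≠ x := fun u hu h => hxK (h ▸ hu)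
  have hBy : ∀ e ∈ B, e ≠ y := fun e he h => hyB (h ▸ he)
  have hBx' : ∀ e ∈ B, e ≠ x := fun e he h => hxB (h ▸ he)
  -- majority facts
  have h56 : ∀ c d : C, AtLeastRatio V (5/6) c d → 5 * M ≤ 6 * votesBefore V c d := by
    intro c d h
    unfold AtLeastRatio at h
    rw [← hMdef] at h
    have : (5 : ℝ) * M ≤ 6 * votesBefore V c d := by linarith
    exact_mod_cast this
  have hKbad : ∀ u ∈ K, AtLeastRatio V (5/6) u x := by
    intro u hu
    have hu' := hu
    simp only [hKdef, Finset.mem_filter, Finset.mem_univ, true_and] at hu'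
    rcases hx u (hKx u hu) with h | h
    · exfalso
      have := hymax' u (hKx u hu) hu'.2 h
      omega
    · exact h
  have hBgood : ∀ e ∈ B, AtLeastRatio V (5/6) x e := by
    intro e he
    have he' := he
    simp only [hBdef, Finset.mem_filter, Finset.mem_univ, true_and] at he'
    rcases hx e (hBx' e he) with h | h
    · exact h
    · exact absurd (lt_trans (hA e h) he') (lt_irrefl _)
  -- classification of all candidates by position
  have hclass : ∀ z : C, ((r y : Fin _) : ℕ) ≤ ((r z : Fin _) : ℕ) →
      z = y ∨ z ∈ K ∨ z = x ∨ z ∈ B := by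
    intro z hz
    rcases lt_trichotomy ((r z : Fin _) : ℕ) ((r x : Fin _) : ℕ) with h | h | h
    · rcases Nat.eq_or_lt_of_le hz with h2 | h2
      · exact Or.inl (r.injective (Fin.ext h2.symm))
      · exact Or.inr (Or.inl (by simp [hKdef]; omega))
    · exact Or.inr (Or.inr (Or.inl (r.injective (Fin.ext h))))
    · refine Or.inr (Or.inr (Or.inr ?_))
      simp only [hBdef, Finset.mem_filter, Finset.mem_univ, true_and]
      exact h
  -- positions under r'
  have hvy : ((r' y : Fin _) : ℕ) = ((r x : Fin _) : ℕ) := by rw [hval]; simp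
  have hvx : ((r' x : Fin _) : ℕ) = ((r x : Fin _) : ℕ) - 1 := by
    rw [hval, if_neg (Ne.symm hyne), if_pos ⟨hqP, le_refl _⟩]
  have hvK : ∀ u ∈ K, ((r' u : Fin _) : ℕ) = ((r u : Fin _) : ℕ) - 1 := by
    intro u hu
    have hu' := hu
    simp only [hKdef, Finset.mem_filter, Finset.mem_univ, true_and] at hu'
    rw [hval, if_neg (hKy u hu), if_pos ⟨hu'.1, le_of_lt hu'.2⟩]
  have hvB : ∀ e ∈ B, ((r' e : Fin _) : ℕ) = ((r e : Fin _) : ℕ) := by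
    intro e he
    have he' : ((r x : Fin _) : ℕ) < ((r e : Fin _) : ℕ) := by
      exact (Finset.mem_filter.mp he).2
    rw [hval, if_neg (hBy e he), if_neg (by omega)]
  have hKpos : ∀ u ∈ K, ((r y : Fin _) : ℕ) < ((r u : Fin _) : ℕ) ∧
      ((r u : Fin _) : ℕ) < ((r x : Fin _) : ℕ) := by
    intro u hu
    simpa only [hKdef, Finset.mem_filter, Finset.mem_univ, true_and] using hu
  have hBpos : ∀ e ∈ B, ((r x : Fin _) : ℕ) < ((r e : Fin _) : ℕ) := by
    intro e he
    exact (Finset.mem_filter.mp he).2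
  -- top of the relevant sets under r is y
  have htopr : ∀ S : Finset C, y ∈ S →
      (∀ z ∈ S, ((r y : Fin _) : ℕ) ≤ ((r z : Fin _) : ℕ)) → topS r S = (y : WithTop C) :=
    fun S hyS h => topS_eq_of r hyS fun z hz => Fin.le_def.mpr (h z hz)
  -- top under r' : x on sets inside {y,x} ∪ B containing x
  have htopx' : ∀ S : Finset C, x ∈ S → (∀ z ∈ S, z = y ∨ z = x ∨ z ∈ B) →
      topS r' S = (x : WithTop C) := by
    intro S hxS h
    apply topS_eq_of r' hxS
    intro z hz
    apply Fin.le_def.mpr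
    rcases h z hz with rfl | rfl | hzB
    · rw [hvx, hvy]; omega
    · exact le_refl _
    · rw [hvx, hvB z hzB]; have := hBpos z hzB; omega
  -- top under r' : u on sets inside {y,x,u} ∪ B with u ∈ K
  have htopu' : ∀ (S : Finset C) (u : C), u ∈ S → u ∈ K →
      (∀ z ∈ S, z = y ∨ z = x ∨ z = u ∨ z ∈ B) → topS r' S = (u : WithTop C) := by
    intro S u huS huK h
    have hup := hKpos u huK
    apply topS_eq_of r' huS
    intro z hz
    apply Fin.le_def.mpr
    rcases h z hz with rfl | rfl | rfl | hzB
    · rw [hvK u huK, hvy]; omega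
    · rw [hvK u huK, hvx]; omega
    · exact le_refl _
    · rw [hvK u huK, hvB z hzB]; have := hBpos z hzB; omega
  -- global vote-count facts
  have f1 : votesBefore V x y + votesBefore V y x = M := by
    rw [hMdef]; exact vB_total V (Ne.symm hyne)
  have f2 : 5 * M ≤ 6 * votesBefore V x y := h56 x y hxy
  have f4 : ∀ u ∈ K, 5 * M ≤ 6 * votesBefore V u x := fun u hu => h56 u x (hKbad u hu)
  have f3 : ∀ u ∈ K, votesBefore V u y + votesBefore V y u = M := fun u hu => by
    rw [hMdef]; exact vB_total V (hKy u hu)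
  have f6 : ∀ u : C, votesBefore V u x + votesBefore V x y ≤ votesBefore V u y + M := by
    intro u; rw [hMdef]; exact vB_chain V u x y
  have f7 : ∀ e ∈ B, 5 * M ≤ 6 * votesBefore V x e := fun e he => h56 x e (hBgood e he)
  have f9 : ∀ u e : C, votesBefore V u x + votesBefore V x e ≤ votesBefore V u e + M := by
    intro u e; rw [hMdef]; exact vB_chain V u x e
  have fMc : Multiset.card V = M := hMdef.symm
  -- the six per-shape bounds
  have hD1 : 6 * Wc V r' {y, x} + 4 * M ≤ 6 * Wc V r {y, x} := by
    have hty : topS r ({y, x} : Finset C) = (y : WithTop C) := by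
      apply htopr _ (by simp)
      intro z hz
      simp only [Finset.mem_insert, Finset.mem_singleton] at hz
      rcases hz with rfl | rfl
      · exact le_refl _
      · exact le_of_lt hqP
    have htx : topS r' ({y, x} : Finset C) = (x : WithTop C) := by
      apply htopx' _ (by simp)
      intro z hz
      simp only [Finset.mem_insert, Finset.mem_singleton] at hz
      rcases hz with rfl | rfl
      · exact Or.inl rfl
      · exact Or.inr (Or.inl rfl)
    rw [Wc_eq V r _ y hty, Wc_eq V r' _ x htx]
    have n1 : Nc V y {y, x} ≤ votesBefore V y x := Nc_le_vB V (by simp) (by simp) hyne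
    have n2 : votesBefore V x y ≤ Nc V x {y, x} := by
      apply vB_le_Nc V (by simp)
      intro z hz
      simp only [Finset.mem_insert, Finset.mem_singleton] at hz
      tauto
    have n3 := Nc_le_card V y ({y, x} : Finset C)
    omega
  have hD2 : ∀ u ∈ K, 6 * Wc V r' {y, u} + 2 * M ≤ 6 * Wc V r {y, u} := by
    intro u hu
    have hty : topS r ({y, u} : Finset C) = (y : WithTop C) := by
      apply htopr _ (by simp)
      intro z hz
      simp only [Finset.mem_insert, Finset.mem_singleton] at hz
      rcases hz with rfl | rfl
      · exact le_refl _
      · exact le_of_lt (hKpos z hu).1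
    have htu : topS r' ({y, u} : Finset C) = (u : WithTop C) := by
      apply htopu' _ u (by simp) hu
      intro z hz
      simp only [Finset.mem_insert, Finset.mem_singleton] at hz
      tauto
    rw [Wc_eq V r _ y hty, Wc_eq V r' _ u htu]
    have n1 : Nc V y {y, u} ≤ votesBefore V y u :=
      Nc_le_vB V (by simp) (by simp) (Ne.symm (hKy u hu))
    have n2 : votesBefore V u y ≤ Nc V u {y, u} := by
      apply vB_le_Nc V (by simp)
      intro z hz
      simp only [Finset.mem_insert, Finset.mem_singleton] at hz
      tauto
    have n3 := Nc_le_card V y ({y, u} : Finset C)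
    have := f3 u hu; have := f4 u hu; have := f6 u
    omega
  have hD3 : ∀ u ∈ K, 6 * Wc V r' {y, x, u} + 2 * M ≤ 6 * Wc V r {y, x, u} := by
    intro u hu
    have hty : topS r ({y, x, u} : Finset C) = (y : WithTop C) := by
      apply htopr _ (by simp)
      intro z hz
      simp only [Finset.mem_insert, Finset.mem_singleton] at hz
      rcases hz with rfl | rfl | rfl
      · exact le_refl _
      · exact le_of_lt hqP
      · exact le_of_lt (hKpos z hu).1
    have htu : topS r' ({y, x, u} : Finset C) = (u : WithTop C) := by
      apply htopu' _ u (by simp) hu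
      intro z hz
      simp only [Finset.mem_insert, Finset.mem_singleton] at hz
      tauto
    rw [Wc_eq V r _ y hty, Wc_eq V r' _ u htu]
    have n1 : Nc V y {y, x, u} ≤ votesBefore V y x := Nc_le_vB V (by simp) (by simp) hyne
    have n2 : votesBefore V u y + votesBefore V u x ≤ Multiset.card V + Nc V u {y, x, u} := by
      apply vB_vB_le_Nc V (by simp)
      intro z hz
      simp only [Finset.mem_insert, Finset.mem_singleton] at hz
      tauto
    have n3 := Nc_le_card V y ({y, x, u} : Finset C)
    have n4 := Nc_le_card V u ({y, x, u} : Finset C)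
    have := f3 u hu; have := f4 u hu; have := f6 u
    omega
  have hD4 : ∀ e ∈ B, 6 * Wc V r' {y, x, e} + 3 * M ≤ 6 * Wc V r {y, x, e} := by
    intro e he
    have hty : topS r ({y, x, e} : Finset C) = (y : WithTop C) := by
      apply htopr _ (by simp)
      intro z hz
      simp only [Finset.mem_insert, Finset.mem_singleton] at hz
      rcases hz with rfl | rfl | rfl
      · exact le_refl _
      · exact le_of_lt hqP
      · exact le_of_lt (lt_trans hqP (hBpos z he))
    have htx : topS r' ({y, x, e} : Finset C) = (x : WithTop C) := by
      apply htopx' _ (by simp)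
      intro z hz
      simp only [Finset.mem_insert, Finset.mem_singleton] at hz
      rcases hz with rfl | rfl | rfl
      · exact Or.inl rfl
      · exact Or.inr (Or.inl rfl)
      · exact Or.inr (Or.inr he)
    rw [Wc_eq V r _ y hty, Wc_eq V r' _ x htx]
    have n1 : Nc V y {y, x, e} ≤ votesBefore V y x := Nc_le_vB V (by simp) (by simp) hyne
    have n2 : votesBefore V x y + votesBefore V x e ≤
        Multiset.card V + Nc V x {y, x, e} := by
      apply vB_vB_le_Nc V (by simp)
      intro z hz
      simp only [Finset.mem_insert, Finset.mem_singleton] at hz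
      tauto
    have n3 := Nc_le_card V y ({y, x, e} : Finset C)
    have n4 := Nc_le_card V x ({y, x, e} : Finset C)
    have := f7 e he
    omega
  have hD5 : ∀ u ∈ K, ∀ e ∈ B, Wc V r' {y, u, e} ≤ Wc V r {y, u, e} := by
    intro u hu e he
    have hty : topS r ({y, u, e} : Finset C) = (y : WithTop C) := by
      apply htopr _ (by simp)
      intro z hz
      simp only [Finset.mem_insert, Finset.mem_singleton] at hz
      rcases hz with rfl | rfl | rfl
      · exact le_refl _
      · exact le_of_lt (hKpos z hu).1
      · exact le_of_lt (lt_trans hqP (hBpos z he))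
    have htu : topS r' ({y, u, e} : Finset C) = (u : WithTop C) := by
      apply htopu' _ u (by simp) hu
      intro z hz
      simp only [Finset.mem_insert, Finset.mem_singleton] at hz
      rcases hz with rfl | rfl | rfl
      · exact Or.inl rfl
      · exact Or.inr (Or.inr (Or.inl rfl))
      · exact Or.inr (Or.inr (Or.inr he))
    rw [Wc_eq V r _ y hty, Wc_eq V r' _ u htu]
    have n1 : Nc V y {y, u, e} ≤ votesBefore V y u :=
      Nc_le_vB V (by simp) (by simp) (Ne.symm (hKy u hu))
    have n2 : votesBefore V u y + votesBefore V u e ≤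
        Multiset.card V + Nc V u {y, u, e} := by
      apply vB_vB_le_Nc V (by simp)
      intro z hz
      simp only [Finset.mem_insert, Finset.mem_singleton] at hz
      tauto
    have n3 := Nc_le_card V y ({y, u, e} : Finset C)
    have n4 := Nc_le_card V u ({y, u, e} : Finset C)
    have g1 : votesBefore V u e + votesBefore V e u = M := by
      rw [hMdef]; exact vB_total V (fun h => hKB u hu (h ▸ he))
    have := f3 u hu; have := f4 u hu; have := f6 u; have := f7 e he; have := f9 u e
    omega
  have hD6 : ∀ s ∈ K.powersetCard 2,
      6 * Wc V r' (insert y s) ≤ 6 * Wc V r (insert y s) + 2 * M := by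
    intro s hs
    rw [Finset.mem_powersetCard] at hs
    obtain ⟨hsK, hs2⟩ := hs
    obtain ⟨u, hus⟩ := Finset.card_pos.mp (by omega : 0 < s.card)
    have huK : u ∈ K := hsK hus
    have hty : topS r (insert y s) = (y : WithTop C) := by
      apply htopr _ (Finset.mem_insert_self y s)
      intro z hz
      rcases Finset.mem_insert.mp hz with rfl | hz'
      · exact le_refl _
      · exact le_of_lt (hKpos z (hsK hz')).1
    rw [Wc_eq V r _ y hty]
    have n1 : Nc V y (insert y s) ≤ votesBefore V y u :=
      Nc_le_vB V (Finset.mem_insert_self y s) (Finset.mem_insert_of_mem hus)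
        (Ne.symm (hKy u huK))
    have n3 := Wc_le_card V r' (insert y s)
    rw [fMc] at n3
    have := f3 u huK; have := f4 u huK; have := f6 u
    omega
  -- classification: subsets whose top changes are of one of the six shapes
  have hD0 : ∀ S : Finset C,
      S ∉ ({({y, x} : Finset C)} : Finset (Finset C)) →
      S ∉ K.image (fun u => ({y, u} : Finset C)) →
      S ∉ K.image (fun u => ({y, x, u} : Finset C)) →
      S ∉ B.image (fun e => ({y, x, e} : Finset C)) →
      S ∉ (K ×ˢ B).image (fun p => ({y, p.1, p.2} : Finset C)) →
      S ∉ (K.powersetCard 2).image (fun s => insert y s) →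
      S.card ≤ 3 → topS r' S = topS r S := by
    intro S h1 h2 h3 h4 h5 h6 hcard
    by_cases hSe : S = ∅
    · subst hSe; rfl
    obtain ⟨m, hmS, hmin⟩ :=
      Finset.exists_min_image S (fun z => ((r z : Fin _) : ℕ))
        (Finset.nonempty_of_ne_empty hSe)
    have htr : topS r S = (m : WithTop C) :=
      topS_eq_of r hmS fun z hz => Fin.le_def.mpr (hmin z hz)
    rw [htr]
    by_cases hyS : y ∈ S
    · by_cases hlow : ∃ w ∈ S, ((r w : Fin _) : ℕ) < ((r y : Fin _) : ℕ)
      · -- some element of S is above y : the top is unchanged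
        obtain ⟨w, hwS, hw⟩ := hlow
        have hmq : ((r m : Fin _) : ℕ) < ((r y : Fin _) : ℕ) :=
          lt_of_le_of_lt (hmin w hwS) hw
        have hmy : m ≠ y := fun h => by rw [h] at hmq; omega
        apply topS_eq_of r' hmS
        intro z hz
        apply Fin.le_def.mpr
        rw [hval m, if_neg hmy, hval z]
        have hmz := hmin z hz
        by_cases hzy : z = y
        · rw [if_pos hzy]; split_ifs <;> omega
        · rw [if_neg hzy]; split_ifs <;> omega
      · push_neg at hlow
        have hmy : m = y := by
          have h1 := hmin y hyS
          have h2 := hlow m hmS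
          exact r.injective (Fin.ext (le_antisymm h1 h2))
        subst hmy
        by_cases hmid : ∃ z ∈ S, ((r m : Fin _) : ℕ) < ((r z : Fin _) : ℕ) ∧
            ((r z : Fin _) : ℕ) ≤ ((r x : Fin _) : ℕ)
        · -- S is one of the six shapes : contradiction
          exfalso
          obtain ⟨z0, hz0S, hz0a, hz0b⟩ := hmid
          have hz0y : z0 ≠ m := fun h => by rw [h] at hz0a; omega
          have hz0' : z0 ∈ S.erase m := Finset.mem_erase.mpr ⟨hz0y, hz0S⟩
          have hce : (S.erase m).card = S.card - 1 := Finset.card_erase_of_mem hyS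
          have hcS : 1 ≤ (S.erase m).card := Finset.card_pos.mpr ⟨z0, hz0'⟩
          have hSins : S = insert m (S.erase m) := (Finset.insert_erase hyS).symm
          have hclass' : ∀ z ∈ S.erase m, z ∈ K ∨ z = x ∨ z ∈ B := by
            intro z hz
            obtain ⟨hzy, hzS⟩ := Finset.mem_erase.mp hz
            rcases hclass z (hlow z hzS) with h | h | h | h
            · exact absurd h hzy
            · exact Or.inl h
            · exact Or.inr (Or.inl h)
            · exact Or.inr (Or.inr h)
          have hz0nB : z0 ∉ B := fun h => by have := hBpos z0 h; omega
          have : (S.erase m).card = 1 ∨ (S.erase m).card = 2 := by omega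
          rcases this with hc1 | hc2
          · -- pair case
            obtain ⟨a, ha⟩ := Finset.card_eq_one.mp hc1
            have hz0a' : z0 = a := Finset.mem_singleton.mp (ha ▸ hz0')
            subst hz0a'
            have hSform : S = {m, z0} := by rw [hSins, ha]
            rcases hclass' z0 hz0' with h | h | h
            · exact h2 (Finset.mem_image.mpr ⟨z0, h, hSform.symm⟩)
            · subst h; exact h1 (Finset.mem_singleton.mpr hSform)
            · exact hz0nB h
          · -- triple case
            obtain ⟨a, c, hac, hS'⟩ := Finset.card_eq_two.mp hc2
            have hSform : S = insert m {a, c} := by rw [hSins, hS']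
            have haS' : a ∈ S.erase m := by rw [hS']; simp
            have hcS' : c ∈ S.erase m := by rw [hS']; simp
            have hz0mem : z0 = a ∨ z0 = c := by
              have := hS' ▸ hz0'
              simpa using this
            rcases hclass' a haS' with hA1 | hA1 | hA1 <;>
              rcases hclass' c hcS' with hC1 | hC1 | hC1
            · -- both in K
              refine h6 (Finset.mem_image.mpr ⟨{a, c}, ?_, hSform.symm⟩)
              rw [Finset.mem_powersetCard]
              exact ⟨fun z hz => by
                rcases Finset.mem_insert.mp hz with rfl | hz'
                · exact hA1
                · rw [Finset.mem_singleton.mp hz']; exact hC1,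
                Finset.card_pair hac⟩
            · -- a ∈ K, c = x
              subst hC1
              refine h3 (Finset.mem_image.mpr ⟨a, hA1, ?_⟩)
              rw [hSform, Finset.pair_comm a c]
            · -- a ∈ K, c ∈ B
              exact h5 (Finset.mem_image.mpr ⟨(a, c),
                Finset.mem_product.mpr ⟨hA1, hC1⟩, hSform.symm⟩)
            · -- a = x, c ∈ K
              subst hA1
              exact h3 (Finset.mem_image.mpr ⟨c, hC1, hSform.symm⟩)
            · exact absurd (hA1.trans hC1.symm) hac
            · -- a = x, c ∈ B
              subst hA1
              exact h4 (Finset.mem_image.mpr ⟨c, hC1, hSform.symm⟩)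
            · -- a ∈ B, c ∈ K
              refine h5 (Finset.mem_image.mpr ⟨(c, a),
                Finset.mem_product.mpr ⟨hC1, hA1⟩, ?_⟩)
              rw [hSform, Finset.pair_comm a c]
            · -- a ∈ B, c = x
              subst hC1
              refine h4 (Finset.mem_image.mpr ⟨a, hA1, ?_⟩)
              rw [hSform, Finset.pair_comm a c]
            · -- both in B : contradicts z0
              rcases hz0mem with rfl | rfl
              · exact hz0nB hA1
              · exact hz0nB hC1
        · -- nothing between y and x in S : top unchanged (both y)
          push_neg at hmid
          apply topS_eq_of r' hmS
          intro z hz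
          apply Fin.le_def.mpr
          rw [hval m, if_pos rfl, hval z]
          have hl := hlow z hz
          have hm := hmid z hz
          by_cases hzy : z = m
          · rw [if_pos hzy]
          · rw [if_neg hzy]
            have hne : ((r z : Fin _) : ℕ) ≠ ((r m : Fin _) : ℕ) :=
              fun h => hzy (r.injective (Fin.ext h))
            split_ifs <;> omega
    · -- y ∉ S : top unchanged
      apply topS_eq_of r' hmS
      intro z hz
      apply Fin.le_def.mpr
      have hmy : m ≠ y := fun h => hyS (h ▸ hmS)
      have hzy : z ≠ y := fun h => hyS (h ▸ hz)
      have hmz := hmin z hz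
      rw [hval m, if_neg hmy, hval z, if_neg hzy]
      split_ifs <;> omega
  -- the six families of subsets
  set T1 : Finset (Finset C) := {({y, x} : Finset C)} with hT1def
  set T2 : Finset (Finset C) := K.image (fun u => ({y, u} : Finset C)) with hT2def
  set T3 : Finset (Finset C) := K.image (fun u => ({y, x, u} : Finset C)) with hT3def
  set T4 : Finset (Finset C) := B.image (fun e => ({y, x, e} : Finset C)) with hT4def
  set T5 : Finset (Finset C) := (K ×ˢ B).image (fun p => ({y, p.1, p.2} : Finset C)) with hT5def
  set T6 : Finset (Finset C) := (K.powersetCard 2).image (fun s => insert y s) with hT6def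
  set P3 : Finset (Finset C) :=
    (Finset.univ : Finset C).powerset.filter (fun S => S.card ≤ 3) with hP3def
  set U : Finset (Finset C) := T1 ∪ T2 ∪ T3 ∪ T4 ∪ T5 ∪ T6 with hUdef
  -- membership facts
  have hxT2 : ∀ S ∈ T2, S.card = 2 := by
    intro S hS
    obtain ⟨u, hu, rfl⟩ := Finset.mem_image.mp hS
    exact Finset.card_pair (Ne.symm (hKy u hu))
  have hxT3 : ∀ S ∈ T3, S.card = 3 ∧ x ∈ S := by
    intro S hS
    obtain ⟨u, hu, rfl⟩ := Finset.mem_image.mp hS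
    constructor
    · rw [Finset.card_insert_of_notMem (by
        simp only [Finset.mem_insert, Finset.mem_singleton, not_or]
        exact ⟨hyne, Ne.symm (hKy u hu)⟩), Finset.card_pair (Ne.symm (hKx u hu))]
    · simp
  have hxT4 : ∀ S ∈ T4, S.card = 3 ∧ x ∈ S := by
    intro S hS
    obtain ⟨e, he, rfl⟩ := Finset.mem_image.mp hS
    constructor
    · rw [Finset.card_insert_of_notMem (by
        simp only [Finset.mem_insert, Finset.mem_singleton, not_or]
        exact ⟨hyne, Ne.symm (hBy e he)⟩), Finset.card_pair (Ne.symm (hBx' e he))]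
    · simp
  have hxT5 : ∀ S ∈ T5, x ∉ S ∧ ∃ e ∈ B, e ∈ S := by
    intro S hS
    obtain ⟨⟨u, e⟩, hue, rfl⟩ := Finset.mem_image.mp hS
    obtain ⟨hu, he⟩ := Finset.mem_product.mp hue
    refine ⟨?_, e, he, by simp⟩
    simp only [Finset.mem_insert, Finset.mem_singleton, not_or]
    exact ⟨Ne.symm hyne, Ne.symm (hKx u hu), Ne.symm (hBx' e he)⟩
  have hxT6 : ∀ S ∈ T6, x ∉ S ∧ ∀ z ∈ S, z = y ∨ z ∈ K := by
    intro S hS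
    obtain ⟨s, hs, rfl⟩ := Finset.mem_image.mp hS
    rw [Finset.mem_powersetCard] at hs
    constructor
    · intro hxS
      rcases Finset.mem_insert.mp hxS with h | h
      · exact hyne h.symm
      · exact hxK (hs.1 h)
    · intro z hz
      rcases Finset.mem_insert.mp hz with rfl | h
      · exact Or.inl rfl
      · exact Or.inr (hs.1 h)
  -- disjointness
  have d2 : Disjoint T1 T2 := by
    rw [Finset.disjoint_left]
    intro S hS1 hS2
    obtain ⟨u, hu, heq⟩ := Finset.mem_image.mp hS2
    rw [Finset.mem_singleton] at hS1
    have : x ∈ ({y, u} : Finset C) := by rw [heq, hS1]; simp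
    rcases Finset.mem_insert.mp this with h | h
    · exact hyne h.symm
    · exact hxK (Finset.mem_singleton.mp h ▸ hu)
  have hc1 : ({y, x} : Finset C).card = 2 := Finset.card_pair hyne
  have d3 : Disjoint (T1 ∪ T2) T3 := by
    rw [Finset.disjoint_left]
    intro S hS1 hS3
    have h3 := (hxT3 S hS3).1
    rcases Finset.mem_union.mp hS1 with h | h
    · rw [Finset.mem_singleton] at h; rw [h, hc1] at h3; omega
    · rw [hxT2 S h] at h3; omega
  have d4 : Disjoint (T1 ∪ T2 ∪ T3) T4 := by
    rw [Finset.disjoint_left]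
    intro S hS1 hS4
    obtain ⟨e, he, heq⟩ := Finset.mem_image.mp hS4
    have h4 := (hxT4 S hS4).1
    rcases Finset.mem_union.mp hS1 with h | h
    · rcases Finset.mem_union.mp h with h' | h'
      · rw [Finset.mem_singleton] at h'; rw [h', hc1] at h4; omega
      · rw [hxT2 S h'] at h4; omega
    · obtain ⟨u, hu, hequ⟩ := Finset.mem_image.mp h
      have : u ∈ ({y, x, e} : Finset C) := by rw [heq, ← hequ]; simp
      rcases Finset.mem_insert.mp this with h' | h'
      · exact hKy u hu h'
      · rcases Finset.mem_insert.mp h' with h'' | h''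
        · exact hKx u hu h''
        · exact hKB u hu (Finset.mem_singleton.mp h'' ▸ he)
  have d5 : Disjoint (T1 ∪ T2 ∪ T3 ∪ T4) T5 := by
    rw [Finset.disjoint_left]
    intro S hS1 hS5
    obtain ⟨hx5, e, he, heS⟩ := hxT5 S hS5
    obtain ⟨⟨u, e'⟩, hue, heq⟩ := Finset.mem_image.mp hS5
    rcases Finset.mem_union.mp hS1 with h | h
    · rcases Finset.mem_union.mp h with h' | h'
      · rcases Finset.mem_union.mp h' with h'' | h''
        · rw [Finset.mem_singleton] at h''
          exact hx5 (by rw [h'']; simp)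
        · obtain ⟨u', hu', hequ⟩ := Finset.mem_image.mp h''
          have : e ∈ ({y, u'} : Finset C) := by rw [hequ]; exact heS
          rcases Finset.mem_insert.mp this with h3 | h3
          · exact hBy e he h3
          · exact hKB u' hu' (Finset.mem_singleton.mp h3 ▸ he)
      · exact hx5 (hxT3 S h').2
    · exact hx5 (hxT4 S h).2
  have d6 : Disjoint (T1 ∪ T2 ∪ T3 ∪ T4 ∪ T5) T6 := by
    rw [Finset.disjoint_left]
    intro S hS1 hS6
    obtain ⟨hx6, hall⟩ := hxT6 S hS6
    rcases Finset.mem_union.mp hS1 with h | h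
    · rcases Finset.mem_union.mp h with h' | h'
      · rcases Finset.mem_union.mp h' with h'' | h''
        · rcases Finset.mem_union.mp h'' with h3 | h3
          · rw [Finset.mem_singleton] at h3
            exact hx6 (by rw [h3]; simp)
          · obtain ⟨u', hu', hequ⟩ := Finset.mem_image.mp h3
            have hc2 := hxT2 S h3
            obtain ⟨s, hs, heqs⟩ := Finset.mem_image.mp hS6
            rw [Finset.mem_powersetCard] at hs
            have : (insert y s).card = 3 := by
              rw [Finset.card_insert_of_notMem (fun h => hyK (hs.1 h)), hs.2]
            rw [heqs] at this; omega
        · exact hx6 (hxT3 S h'').2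
      · exact hx6 (hxT4 S h').2
    · obtain ⟨hx5, e, he, heS⟩ := hxT5 S h
      rcases hall e heS with h3 | h3
      · exact hBy e he h3
      · exact hKB e h3 he
  -- U is made of small subsets
  have hUP3 : U ⊆ P3 := by
    intro S hS
    rw [hP3def, Finset.mem_filter]
    refine ⟨Finset.mem_powerset.mpr (Finset.subset_univ S), ?_⟩
    rw [hUdef] at hS
    simp only [Finset.mem_union] at hS
    rcases hS with ((((h | h) | h) | h) | h) | h
    · rw [Finset.mem_singleton.mp h, hc1]; omega
    · have := hxT2 S h; omega
    · have := (hxT3 S h).1; omega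
    · have := (hxT4 S h).1; omega
    · obtain ⟨⟨u, e⟩, _, rfl⟩ := Finset.mem_image.mp h
      dsimp only
      have h1 := Finset.card_insert_le y ({u, e} : Finset C)
      have h2 := Finset.card_insert_le u ({e} : Finset C)
      have h3 : ({e} : Finset C).card = 1 := Finset.card_singleton e
      omega
    · obtain ⟨s, hs, rfl⟩ := Finset.mem_image.mp h
      rw [Finset.mem_powersetCard] at hs
      have h1 := Finset.card_insert_le y s
      omega
  -- no change off U
  have hzero : ∀ S ∈ P3, S ∉ U →
      6 * (Wc V r S : ℤ) - 6 * (Wc V r' S : ℤ) = 0 := by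
    intro S hS hSU
    rw [hUdef] at hSU
    simp only [Finset.mem_union, not_or] at hSU
    obtain ⟨⟨⟨⟨⟨n1, n2⟩, n3⟩, n4⟩, n5⟩, n6⟩ := hSU
    rw [hP3def, Finset.mem_filter] at hS
    have heq := hD0 S n1 n2 n3 n4 n5 n6 hS.2
    have hWeq : Wc V r' S = Wc V r S := by
      unfold Wc
      congr 1
      exact Multiset.filter_congr fun σ _ => by rw [heq]
    rw [hWeq]; ring
  -- lower bounds for the six partial sums
  have hB1 : (4:ℤ) * M ≤ ∑ S ∈ T1, (6 * (Wc V r S : ℤ) - 6 * (Wc V r' S : ℤ)) := by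
    rw [hT1def, Finset.sum_singleton]
    have h := hD1; zify at h; linarith
  have hB2 : (2:ℤ) * M * K.card ≤
      ∑ S ∈ T2, (6 * (Wc V r S : ℤ) - 6 * (Wc V r' S : ℤ)) := by
    rw [hT2def, Finset.sum_image (fun u hu u' hu' h => by
      have : u ∈ ({y, u'} : Finset C) := by rw [← h]; simp
      rcases Finset.mem_insert.mp this with h' | h'
      · exact absurd h' (hKy u hu)
      · exact Finset.mem_singleton.mp h')]
    calc (2:ℤ) * M * K.card = ∑ _u ∈ K, (2 * M : ℤ) := by
          rw [Finset.sum_const, nsmul_eq_mul]; ring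
      _ ≤ _ := Finset.sum_le_sum (fun u hu => by have h := hD2 u hu; zify at h; linarith)
  have hB3 : (2:ℤ) * M * K.card ≤
      ∑ S ∈ T3, (6 * (Wc V r S : ℤ) - 6 * (Wc V r' S : ℤ)) := by
    rw [hT3def, Finset.sum_image (fun u hu u' hu' h => by
      have : u ∈ ({y, x, u'} : Finset C) := by rw [← h]; simp
      rcases Finset.mem_insert.mp this with h' | h'
      · exact absurd h' (hKy u hu)
      · rcases Finset.mem_insert.mp h' with h'' | h''
        · exact absurd h'' (hKx u hu)
        · exact Finset.mem_singleton.mp h'')]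
    calc (2:ℤ) * M * K.card = ∑ _u ∈ K, (2 * M : ℤ) := by
          rw [Finset.sum_const, nsmul_eq_mul]; ring
      _ ≤ _ := Finset.sum_le_sum (fun u hu => by have h := hD3 u hu; zify at h; linarith)
  have hB4 : (3:ℤ) * M * B.card ≤
      ∑ S ∈ T4, (6 * (Wc V r S : ℤ) - 6 * (Wc V r' S : ℤ)) := by
    rw [hT4def, Finset.sum_image (fun e he e' he' h => by
      have : e ∈ ({y, x, e'} : Finset C) := by rw [← h]; simp
      rcases Finset.mem_insert.mp this with h' | h'
      · exact absurd h' (hBy e he)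
      · rcases Finset.mem_insert.mp h' with h'' | h''
        · exact absurd h'' (hBx' e he)
        · exact Finset.mem_singleton.mp h'')]
    calc (3:ℤ) * M * B.card = ∑ _e ∈ B, (3 * M : ℤ) := by
          rw [Finset.sum_const, nsmul_eq_mul]; ring
      _ ≤ _ := Finset.sum_le_sum (fun e he => by have h := hD4 e he; zify at h; linarith)
  have hB5 : (0:ℤ) ≤ ∑ S ∈ T5, (6 * (Wc V r S : ℤ) - 6 * (Wc V r' S : ℤ)) := by
    apply Finset.sum_nonneg
    intro S hS
    obtain ⟨⟨u, e⟩, hue, rfl⟩ := Finset.mem_image.mp hS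
    obtain ⟨hu, he⟩ := Finset.mem_product.mp hue
    dsimp only
    have h := hD5 u hu e he
    zify at h; linarith
  have hB6 : (-2:ℤ) * M * (K.card.choose 2) ≤
      ∑ S ∈ T6, (6 * (Wc V r S : ℤ) - 6 * (Wc V r' S : ℤ)) := by
    rw [hT6def, Finset.sum_image (fun s hs s' hs' h => by
      rw [Finset.mem_coe, Finset.mem_powersetCard] at hs hs'
      have hys : y ∉ s := fun hmem => hyK (hs.1 hmem)
      have hys' : y ∉ s' := fun hmem => hyK (hs'.1 hmem)
      rw [← Finset.erase_insert hys, ← Finset.erase_insert hys', h])]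
    calc (-2:ℤ) * M * (K.card.choose 2)
        = ∑ _s ∈ K.powersetCard 2, (-2 * M : ℤ) := by
          rw [Finset.sum_const, nsmul_eq_mul, Finset.card_powersetCard]; ring
      _ ≤ _ := Finset.sum_le_sum (fun s hs => by have h := hD6 s hs; zify at h; linarith)
  -- the median property gives the opposite inequality
  have hm := hr r'
  rw [kDistV_eq_sum' 3 r V, kDistV_eq_sum' 3 r' V, ← hP3def] at hm
  have hmZ : (∑ S ∈ P3, (Wc V r S : ℤ)) ≤ ∑ S ∈ P3, (Wc V r' S : ℤ) := by
    exact_mod_cast hm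
  have hmedZ : ∑ S ∈ P3, (6 * (Wc V r S : ℤ) - 6 * (Wc V r' S : ℤ)) ≤ 0 := by
    rw [Finset.sum_sub_distrib, ← Finset.mul_sum, ← Finset.mul_sum]
    linarith
  have hUsum : ∑ S ∈ P3, (6 * (Wc V r S : ℤ) - 6 * (Wc V r' S : ℤ)) =
      ∑ S ∈ U, (6 * (Wc V r S : ℤ) - 6 * (Wc V r' S : ℤ)) :=
    (Finset.sum_subset hUP3 (fun S hS hSU => hzero S hS hSU)).symm
  have hUsplit : ∑ S ∈ U, (6 * (Wc V r S : ℤ) - 6 * (Wc V r' S : ℤ)) =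
      ∑ S ∈ T1, (6 * (Wc V r S : ℤ) - 6 * (Wc V r' S : ℤ)) +
      ∑ S ∈ T2, (6 * (Wc V r S : ℤ) - 6 * (Wc V r' S : ℤ)) +
      ∑ S ∈ T3, (6 * (Wc V r S : ℤ) - 6 * (Wc V r' S : ℤ)) +
      ∑ S ∈ T4, (6 * (Wc V r S : ℤ) - 6 * (Wc V r' S : ℤ)) +
      ∑ S ∈ T5, (6 * (Wc V r S : ℤ) - 6 * (Wc V r' S : ℤ)) +
      ∑ S ∈ T6, (6 * (Wc V r S : ℤ) - 6 * (Wc V r' S : ℤ)) := by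
    rw [hUdef, Finset.sum_union d6, Finset.sum_union d5, Finset.sum_union d4,
      Finset.sum_union d3, Finset.sum_union d2]
  -- cardinality bound
  have hkn : K.card + B.card + 2 ≤ n := by
    have e1 : (insert x (insert y (K ∪ B))).card = (insert y (K ∪ B)).card + 1 :=
      Finset.card_insert_of_notMem (by
        simp only [Finset.mem_insert, Finset.mem_union, not_or]
        exact ⟨fun h => hyne h.symm, hxK, hxB⟩)
    have e2 : (insert y (K ∪ B)).card = (K ∪ B).card + 1 :=
      Finset.card_insert_of_notMem (by
        simp only [Finset.mem_union, not_or]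
        exact ⟨hyK, hyB⟩)
    have e3 : (K ∪ B).card = K.card + B.card :=
      Finset.card_union_of_disjoint (Finset.disjoint_left.mpr (fun {a} ha => hKB a ha))
    have e4 : (insert x (insert y (K ∪ B))).card ≤ Fintype.card C := by
      rw [← Finset.card_univ]
      exact Finset.card_le_card (Finset.subset_univ _)
    omega
  -- `choose` identity
  have hch : K.card * (K.card - 1) = 2 * K.card.choose 2 := by
    rcases Nat.eq_zero_or_pos K.card with h0 | h1
    · simp [h0]
    · have he : Even (K.card * (K.card - 1)) := by
        rcases Nat.even_or_odd K.card with he | ho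
        · exact he.mul_right _
        · exact ((Nat.Odd.sub_odd ho odd_one).mul_left _)
      rw [Nat.choose_two_right, Nat.mul_div_cancel' he.two_dvd]
  -- final integer arithmetic
  have hMZ : (1:ℤ) ≤ (M:ℤ) := by exact_mod_cast hM1
  have harith : (K.card:ℤ) * ((K.card:ℤ) - 1) < 4 + 4*(K.card:ℤ) + 3*(B.card:ℤ) := by
    refine arith_key n b K.card B.card (by positivity) (by omega) hbn ?_ ?_
    · exact_mod_cast hkn
    · exact_mod_cast hB
  have hchZ : (K.card:ℤ) * ((K.card:ℤ) - 1) = 2 * (K.card.choose 2 : ℤ) := by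
    rcases Nat.eq_zero_or_pos K.card with h0 | h1
    · simp [h0]
    · have := hch
      zify [h1] at this
      linarith only [this]
  have h7 : (1:ℤ) ≤ 4 + 4*(K.card:ℤ) + 3*(B.card:ℤ) - (K.card:ℤ)*((K.card:ℤ)-1) := by
    linarith only [harith]
  have h8 : (M:ℤ) * 1 ≤ (M:ℤ) * (4 + 4*(K.card:ℤ) + 3*(B.card:ℤ) -
      (K.card:ℤ)*((K.card:ℤ)-1)) :=
    mul_le_mul_of_nonneg_left h7 (by linarith only [hMZ])
  have h9 : (M:ℤ) * ((K.card:ℤ)*((K.card:ℤ)-1)) =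
      (M:ℤ) * (2 * (K.card.choose 2 : ℤ)) := by rw [hchZ]
  linarith only [hB1, hB2, hB3, hB4, hB5, hB6, hmedZ, hUsum, hUsplit, h8, h9, hMZ]
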